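/- arXiv:2011.14690 — 2 statements merged into one kernel-verified Lean document; each statement's English description precedes it below -/
import Mathlib

section
/- Let t ≥ 4 be even, let R be the distinguished symmetric cycle on {1,−1}^t, W(R) its subtope matrix, and P(t) as above. For s ∈ {1,…,t}, let T_s be the vector obtained from (1,…,1) by negating only the s-th coordinate. Then the unique ȳ(s) ∈ ℝ^t with T_s = ȳ(s)·W(R) is: ȳ(1) = P(t)^2; ȳ(s) = P(t)^1 − P(t)^s + P(t)^{s+1} for 1 < s < t; and ȳ(t) = −P(t)^t. -/
/-- The alternating-sign Toeplitz matrix P(t). -/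
def Pmat (t : ℕ) : Matrix (Fin t) (Fin t) ℝ :=
  Matrix.of fun i j =>
    if (i : ℕ) ≤ (j : ℕ) then (-1 : ℝ) ^ ((i : ℕ) + (j : ℕ))
    else (-1 : ℝ) ^ ((i : ℕ) + (j : ℕ) + 1)

/-- The distinguished symmetric cycle R in the hypercube graph on {1,-1}^t:
    R^0 = (1,…,1); for 1 ≤ s ≤ t-1, R^s is R^0 with the first s coordinates
    negated; and R^{k+t} = -R^k for 0 ≤ k ≤ t-1. -/
def Rcyc (t : ℕ) : ℕ → Fin t → ℝ := fun s i =>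
  if s < t then (if (i : ℕ) < s then -1 else 1)
  else (if (i : ℕ) < s - t then 1 else -1)

/-- The subtope matrix W(R), whose rows are S^k = (1/2)(R^k + R^{k+1}). -/
noncomputable def Wmat (t : ℕ) : Matrix (Fin t) (Fin t) ℝ :=
  Matrix.of fun (k : Fin t) (j : Fin t) =>
    (Rcyc t (k : ℕ) j + Rcyc t ((k : ℕ) + 1) j) / 2

private lemma alt_range (n : ℕ) : ∑ j ∈ Finset.range n, (-1:ℝ)^j = (1 - (-1)^n)/2 := by
  induction n with
  | zero => simp
  | succ n ih => rw [Finset.sum_range_succ, ih, pow_succ]; ring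

private lemma alt_Ico (a b : ℕ) (h : a ≤ b) :
    ∑ j ∈ Finset.Ico a b, (-1:ℝ)^j = ((-1)^a - (-1)^b)/2 := by
  rw [Finset.sum_Ico_eq_sub _ h, alt_range, alt_range]; ring

private lemma Wval {t : ℕ} (k j : Fin t) :
    Wmat t k j = if (j:ℕ) < (k:ℕ) then -1 else if (j:ℕ) = (k:ℕ) then 0 else 1 := by
  have hk := k.isLt
  have hj := j.isLt
  simp only [Wmat, Rcyc, Matrix.of_apply]
  split_ifs <;> norm_num <;> omega

private lemma Vval {t : ℕ} (k c : Fin t) :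
    (Pmat t - 1) k c =
      if (k:ℕ) < (c:ℕ) then (-1:ℝ)^((k:ℕ)+(c:ℕ))
      else if (k:ℕ) = (c:ℕ) then 0
      else (-1:ℝ)^((k:ℕ)+(c:ℕ)+1) := by
  have h1 : (1 : Matrix (Fin t) (Fin t) ℝ) k c = if (k:ℕ) = (c:ℕ) then 1 else 0 := by
    rw [Matrix.one_apply]; simp [Fin.ext_iff]
  have he : ∀ n : ℕ, ((-1:ℝ))^(n+n) = 1 := fun n => Even.neg_one_pow ⟨n, rfl⟩
  simp only [Matrix.sub_apply, h1, Pmat, Matrix.of_apply]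
  split_ifs with h1 h2 h3 h4 <;> try omega
  all_goals try ring
  all_goals (rw [h2, ← pow_add, he]; ring)

private lemma WV {t : ℕ} (hev : Even t) : Wmat t * (Pmat t - 1) = 1 := by
  have ht0 : ((-1:ℝ))^t = 1 := hev.neg_one_pow
  have he : ∀ n : ℕ, ((-1:ℝ))^(n+n) = 1 := fun n => Even.neg_one_pow ⟨n, rfl⟩
  ext k c
  have hk := k.isLt; have hc := c.isLt
  rw [Matrix.mul_apply, Matrix.one_apply]
  have hrw : ∀ j : Fin t, Wmat t k j * (Pmat t - 1) j c =
      (fun j : ℕ => (if j < (k:ℕ) then (-1:ℝ) else if j = (k:ℕ) then 0 else 1) *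
        (if j < (c:ℕ) then (-1:ℝ)^(j+(c:ℕ)) else if j = (c:ℕ) then 0
         else (-1:ℝ)^(j+(c:ℕ)+1))) (j:ℕ) := by
    intro j; rw [Wval, Vval]
  rw [Finset.sum_congr rfl (fun j _ => hrw j),
    Fin.sum_univ_eq_sum_range (fun j : ℕ => (if j < (k:ℕ) then (-1:ℝ) else if j = (k:ℕ) then 0 else 1) *
        (if j < (c:ℕ) then (-1:ℝ)^(j+(c:ℕ)) else if j = (c:ℕ) then 0
         else (-1:ℝ)^(j+(c:ℕ)+1))) t]
  by_cases hkc : (k:ℕ) = (c:ℕ)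
  · rw [if_pos (Fin.ext hkc)]
    have hpt : ∀ j ∈ Finset.range t,
        (if j < (k:ℕ) then (-1:ℝ) else if j = (k:ℕ) then 0 else 1) *
          (if j < (c:ℕ) then (-1:ℝ)^(j+(c:ℕ)) else if j = (c:ℕ) then 0
           else (-1:ℝ)^(j+(c:ℕ)+1))
        = (-1:ℝ)^j * (-(-1)^(c:ℕ))
          + (if j = (k:ℕ) then (-1:ℝ)^j * (-1)^(c:ℕ) else 0) := by
      intro j _
      simp only [pow_add, pow_succ]
      split_ifs <;> first | omega | ring
    rw [Finset.sum_congr rfl hpt, Finset.sum_add_distrib, ← Finset.sum_mul, alt_range, ht0,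
      Finset.sum_ite_eq' (Finset.range t) (k:ℕ) (fun j => (-1:ℝ)^j * (-1)^(c:ℕ)),
      if_pos (Finset.mem_range.mpr hk), hkc, ← pow_add, he]
    ring
  · rw [if_neg (fun h => hkc (congrArg Fin.val h))]
    set a := min (k:ℕ) (c:ℕ) with ha
    set b := max (k:ℕ) (c:ℕ) with hb
    have hab : a < b := by rcases Nat.le_total (k:ℕ) (c:ℕ) with h|h <;> simp [ha, hb] <;> omega
    have hbt : b ≤ t := by rcases Nat.le_total (k:ℕ) (c:ℕ) with h|h <;> simp [hb] <;> omega
    have hpt : ∀ j ∈ Finset.range t,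
        (if j < (k:ℕ) then (-1:ℝ) else if j = (k:ℕ) then 0 else 1) *
          (if j < (c:ℕ) then (-1:ℝ)^(j+(c:ℕ)) else if j = (c:ℕ) then 0
           else (-1:ℝ)^(j+(c:ℕ)+1))
        = (-1:ℝ)^j * (-(-1)^(c:ℕ))
          + ((if j = (k:ℕ) then (-1:ℝ)^j * (-1)^(c:ℕ) else 0)
          + ((if j = (c:ℕ) then (-1:ℝ)^j * (-1)^(c:ℕ) else 0)
          + (if a < j ∧ j < b then (-1:ℝ)^j * (2*(-1)^(c:ℕ)) else 0))) := by
      intro j _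
      simp only [pow_add, pow_succ, ha, hb]
      rcases Nat.le_total (k:ℕ) (c:ℕ) with h|h <;>
        [rw [min_eq_left h, max_eq_right h]; rw [min_eq_right h, max_eq_left h]] <;>
        split_ifs <;> first | omega | ring
    rw [Finset.sum_congr rfl hpt, Finset.sum_add_distrib, Finset.sum_add_distrib,
      Finset.sum_add_distrib, ← Finset.sum_mul, alt_range, ht0,
      Finset.sum_ite_eq' (Finset.range t) (k:ℕ) (fun j => (-1:ℝ)^j * (-1)^(c:ℕ)),
      Finset.sum_ite_eq' (Finset.range t) (c:ℕ) (fun j => (-1:ℝ)^j * (-1)^(c:ℕ)),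
      if_pos (Finset.mem_range.mpr hk), if_pos (Finset.mem_range.mpr hc)]
    have hfilt : (Finset.range t).filter (fun j => a < j ∧ j < b) = Finset.Ico (a+1) b := by
      ext j
      simp only [Finset.mem_filter, Finset.mem_range, Finset.mem_Ico]
      omega
    rw [← Finset.sum_filter, hfilt, ← Finset.sum_mul, alt_Ico _ _ (by omega), pow_succ]
    have hsum : ((-1:ℝ))^a * (-1)^b = (-1)^(k:ℕ) * (-1)^(c:ℕ) ∧
        ((-1:ℝ))^a + (-1)^b = (-1)^(k:ℕ) + (-1)^(c:ℕ) := by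
      rcases Nat.le_total (k:ℕ) (c:ℕ) with h|h <;>
        simp [ha, hb, min_eq_left, min_eq_right, max_eq_left, max_eq_right, h] <;> ring_nf <;>
        constructor <;> trivial
    linear_combination (-((-1:ℝ)^(c:ℕ))) * hsum.2

private lemma colsum {t : ℕ} (hev : Even t) (c : Fin t) :
    ∑ k : Fin t, (Pmat t - 1) k c = (-1:ℝ)^(c:ℕ) := by
  have ht0 : ((-1:ℝ))^t = 1 := hev.neg_one_pow
  have he : ∀ n : ℕ, ((-1:ℝ))^(n+n) = 1 := fun n => Even.neg_one_pow ⟨n, rfl⟩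
  have hc := c.isLt
  have hrw : ∀ k : Fin t, (Pmat t - 1) k c =
      (fun k : ℕ => (if k < (c:ℕ) then (-1:ℝ)^(k+(c:ℕ)) else if k = (c:ℕ) then 0
        else (-1:ℝ)^(k+(c:ℕ)+1))) (k:ℕ) := fun k => Vval k c
  rw [Finset.sum_congr rfl (fun k _ => hrw k),
    Fin.sum_univ_eq_sum_range (fun k : ℕ => (if k < (c:ℕ) then (-1:ℝ)^(k+(c:ℕ))
      else if k = (c:ℕ) then 0 else (-1:ℝ)^(k+(c:ℕ)+1))) t]
  have hpt : ∀ k ∈ Finset.range t,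
      (if k < (c:ℕ) then (-1:ℝ)^(k+(c:ℕ)) else if k = (c:ℕ) then 0 else (-1:ℝ)^(k+(c:ℕ)+1))
      = (-1:ℝ)^k * (-(-1)^(c:ℕ))
        + ((if k = (c:ℕ) then (-1:ℝ)^k * (-1)^(c:ℕ) else 0)
        + (if k < (c:ℕ) then (-1:ℝ)^k * (2*(-1)^(c:ℕ)) else 0)) := by
    intro k _
    simp only [pow_add, pow_succ]
    split_ifs <;> first | omega | ring
  rw [Finset.sum_congr rfl hpt, Finset.sum_add_distrib, Finset.sum_add_distrib,
    ← Finset.sum_mul, alt_range, ht0,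
    Finset.sum_ite_eq' (Finset.range t) (c:ℕ) (fun k => (-1:ℝ)^k * (-1)^(c:ℕ)),
    if_pos (Finset.mem_range.mpr hc)]
  have hfilt : (Finset.range t).filter (fun k => k < (c:ℕ)) = Finset.Ico 0 (c:ℕ) := by
    ext k
    simp only [Finset.mem_filter, Finset.mem_range, Finset.mem_Ico]
    omega
  rw [← Finset.sum_filter, hfilt, ← Finset.sum_mul, alt_Ico _ _ (by omega)]
  ring

theorem stmt_15 (t : ℕ) (ht : 4 ≤ t) (hev : Even t)
    (s : ℕ) (hs1 : 1 ≤ s) (hst : s ≤ t)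
    (y : Fin t → ℝ)
    -- ȳ(s) is the (unique) vector with _{−s}T^{(+)} = ȳ(s) · W(R)
    (hy : Matrix.vecMul y (Wmat t) =
      fun c : Fin t => if (c : ℕ) + 1 = s then (-1 : ℝ) else 1) :
    (s = 1 → y = fun c => Pmat t ⟨1, by omega⟩ c) ∧
    (∀ h1 : 1 < s, ∀ h2 : s < t,
      y = fun c => Pmat t ⟨0, by omega⟩ c - Pmat t ⟨s - 1, by omega⟩ c
        + Pmat t ⟨s, h2⟩ c) ∧
    (s = t → y = fun c => -(Pmat t ⟨t - 1, by omega⟩ c)) := by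
  have hW := WV (t := t) hev
  have hyv : y = Matrix.vecMul (fun c : Fin t => if (c : ℕ) + 1 = s then (-1 : ℝ) else 1)
      (Pmat t - 1) := by
    rw [← hy, Matrix.vecMul_vecMul, hW, Matrix.vecMul_one]
  have hs' : s - 1 < t := by omega
  have hyc : ∀ c : Fin t, y c = (-1:ℝ)^(c:ℕ) - 2 * ((Pmat t - 1) ⟨s-1, hs'⟩ c) := by
    intro c
    have hvm : Matrix.vecMul (fun k : Fin t => if (k:ℕ)+1 = s then (-1:ℝ) else 1) (Pmat t - 1) c
        = ∑ k : Fin t, (if (k:ℕ)+1 = s then (-1:ℝ) else 1) * (Pmat t - 1) k c := by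
      simp [Matrix.vecMul, dotProduct]
    have hpt : ∀ k : Fin t, (if (k:ℕ)+1 = s then (-1:ℝ) else 1) * (Pmat t - 1) k c
        = (Pmat t - 1) k c
          + (if k = (⟨s-1,hs'⟩ : Fin t) then (-2) * ((Pmat t - 1) k c) else 0) := by
      intro k
      by_cases h : (k:ℕ) + 1 = s
      · rw [if_pos h, if_pos (Fin.ext (by simp; omega))]; ring
      · rw [if_neg h, if_neg (fun hh => h (by rw [Fin.ext_iff] at hh; simp at hh; omega))]; ring
    rw [hyv] at *
    rw [hvm, Finset.sum_congr rfl (fun k _ => hpt k), Finset.sum_add_distrib, colsum hev,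
      Finset.sum_ite_eq' Finset.univ (⟨s-1,hs'⟩ : Fin t)
        (fun k => (-2) * ((Pmat t - 1) k c)), if_pos (Finset.mem_univ _)]
    ring
  refine ⟨?_, ?_, ?_⟩
  · intro h1
    subst h1
    funext c
    rw [hyc c, Vval]
    simp only [Pmat, Matrix.of_apply]
    rw [show (1:ℕ) - 1 = 0 from rfl, show 1 + (c:ℕ) = (0 + (c:ℕ)) + 1 from by omega]
    split_ifs <;> first | omega | ring
  · intro h1 h2
    funext c
    rw [hyc c, Vval]
    simp only [Pmat, Matrix.of_apply]
    have hsc : s + (c:ℕ) = (s - 1 + (c:ℕ)) + 1 := by omega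
    rw [hsc]
    split_ifs <;> first | omega | ring
  · intro h3
    subst h3
    funext c
    rw [hyc c, Vval]
    simp only [Pmat, Matrix.of_apply]
    have hc := c.isLt
    have h4 : ((-1:ℝ))^(s-1+(c:ℕ)) * (-1) = (-1)^(c:ℕ) := by
      rw [← pow_succ, show s-1+(c:ℕ)+1 = s+(c:ℕ) from by omega, pow_add, hev.neg_one_pow,
        one_mul]
    split_ifs <;> first | omega | linear_combination h4 | linear_combination (-1:ℝ) * h4
end

section
/- Let t ≥ 4 be even, let A ⊆ {1,…,t} be a nonempty union of ρ pairwise nonadjacent intervals [i_1,j_1], …, [i_ρ,j_ρ] (with j_k + 2 ≤ i_{k+1} for all k) such that 1 ∈ A and t ∉ A (so i_1 = 1 and j_ρ < t). Let R be the distinguished symmetric cycle on {1,−1}^t and W(R) its subtope matrix. Then the vector T := _{−A}T^{(+)} (the ±1 vector with negative part A) satisfies T = x̄·W(R) where x̄ = Σ_{k=1}^{ρ} P(t)^{j_k+1} − Σ_{ℓ=2}^{ρ} P(t)^{i_ℓ}. -/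
open Finset

lemma Wmat_apply (t : ℕ) (k j : Fin t) :
    Wmat t k j = if (j:ℕ) < (k:ℕ) then -1 else if (j:ℕ) = (k:ℕ) then 0 else 1 := by
  have hk := k.isLt
  have hj := j.isLt
  unfold Wmat Rcyc
  simp only [Matrix.of_apply]
  split_ifs <;> first | omega | norm_num

noncomputable def pe (m c : ℕ) : ℝ := if m ≤ c then (-1:ℝ)^(m+c) else (-1)^(m+c+1)

lemma neg_one_pow_eq (k : ℕ) : (-1:ℝ)^k = if Even k then 1 else -1 := by
  split_ifs with h
  · exact h.neg_one_pow
  · exact (Nat.not_even_iff_odd.mp h).neg_one_pow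

set_option maxHeartbeats 1000000 in
lemma sumP (m : ℕ) : ∀ n, ∑ c ∈ range n, pe m c =
    if n ≤ m then (if Even n then 0 else (if Even m then (-1:ℝ) else 1))
    else ((if Even m then 0 else 1) + (if Even (n - m) then 0 else 1)) := by
  intro n
  induction n with
  | zero => simp
  | succ n ih =>
    rw [sum_range_succ, ih]
    simp only [pe, neg_one_pow_eq]
    split_ifs <;> simp only [Nat.even_iff, Nat.not_even_iff] at * <;>
      first | omega | norm_num



set_option maxHeartbeats 4000000 in
lemma PW (t : ℕ) (hev : Even t) (m : ℕ) (hm : m < t) (j : Fin t) :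
    Matrix.vecMul (Pmat t ⟨m, hm⟩) (Wmat t) j = if (j:ℕ) < m then -1 else 1 := by
  have hj := j.isLt
  have hpt : ∀ c : Fin t, Pmat t ⟨m, hm⟩ c * Wmat t c j =
      (fun n : ℕ => pe m n * (if (j:ℕ) < n then -1 else if (j:ℕ) = n then 0 else 1)) (c : ℕ) := by
    intro c
    rw [Wmat_apply]
    rfl
  have key : Matrix.vecMul (Pmat t ⟨m, hm⟩) (Wmat t) j
      = ∑ c ∈ range t, pe m c *
        (if (j:ℕ) < c then -1 else if (j:ℕ) = c then 0 else 1) := by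
    rw [Matrix.vecMul, dotProduct, Finset.sum_congr rfl (fun c _ => hpt c)]
    exact Fin.sum_univ_eq_sum_range (fun n => pe m n * (if (j:ℕ) < n then -1 else if (j:ℕ) = n then 0 else 1)) t
  rw [key]
  have hsplit : range t = range ((j:ℕ)+1) ∪ Ico ((j:ℕ)+1) t := by
    rw [range_eq_Ico, range_eq_Ico]
    rw [Finset.Ico_union_Ico_eq_Ico (by omega) (by omega)]
  rw [hsplit, Finset.sum_union (Finset.disjoint_left.mpr (fun x hx hy => by
    rw [mem_range] at hx; rw [mem_Ico] at hy; omega))]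
  have h1 : ∑ c ∈ range ((j:ℕ)+1), pe m c *
      (if (j:ℕ) < c then -1 else if (j:ℕ) = c then 0 else 1)
      = ∑ c ∈ range (j:ℕ), pe m c := by
    rw [sum_range_succ, if_neg (by omega), if_pos rfl, mul_zero, add_zero]
    refine Finset.sum_congr rfl fun c hc => ?_
    rw [mem_range] at hc
    rw [if_neg (by omega), if_neg (by omega), mul_one]
  have h2 : ∑ c ∈ Ico ((j:ℕ)+1) t, pe m c *
      (if (j:ℕ) < c then -1 else if (j:ℕ) = c then 0 else 1)
      = -(∑ c ∈ range t, pe m c - ∑ c ∈ range ((j:ℕ)+1), pe m c) := by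
    rw [← Finset.sum_Ico_eq_sub _ (by omega), ← Finset.sum_neg_distrib]
    refine Finset.sum_congr rfl fun c hc => ?_
    rw [mem_Ico] at hc
    rw [if_pos (by omega)]
    ring
  rw [h1, h2, sumP, sumP, sumP]
  obtain ⟨u, hu⟩ := hev
  rw [if_neg (show ¬ t ≤ m by omega)]
  simp only [Nat.even_iff, Nat.not_even_iff]
  split_ifs <;> first | omega | norm_num



lemma chain {ρ : ℕ} (ii jj : Fin ρ → ℕ) (hb : ∀ k, ii k ≤ jj k)
    (hgap : ∀ k : Fin ρ, ∀ h : (k : ℕ) + 1 < ρ, jj k + 2 ≤ ii ⟨(k : ℕ) + 1, h⟩) :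
    ∀ a b : Fin ρ, (a : ℕ) < (b : ℕ) → jj a + 2 ≤ ii b := by
  suffices H : ∀ n (hn : n < ρ) (a : Fin ρ), (a : ℕ) < n → jj a + 2 ≤ ii ⟨n, hn⟩ by
    intro a b hab
    simpa using H (b : ℕ) b.isLt a hab
  intro n
  induction n with
  | zero => intro _ a ha; omega
  | succ n ih =>
    intro hn a ha
    have hn' : n < ρ := by omega
    have g : jj ⟨n, hn'⟩ + 2 ≤ ii ⟨n + 1, hn⟩ := hgap ⟨n, hn'⟩ hn
    rcases Nat.lt_or_ge (a : ℕ) n with h | h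
    · have h2 := ih hn' a h
      have h3 := hb ⟨n, hn'⟩
      omega
    · have : a = ⟨n, hn'⟩ := Fin.ext (show (a : ℕ) = n by omega)
      rw [this]
      omega

theorem stmt_16 (t : ℕ) (ht : 4 ≤ t) (hev : Even t)
    (ρ : ℕ) (hρ : 1 ≤ ρ)
    (ii jj : Fin ρ → ℕ)
    -- each interval [i_k, j_k] satisfies 1 ≤ i_k ≤ j_k ≤ t-1 < t (so t ∉ A)
    (hb : ∀ k, 1 ≤ ii k ∧ ii k ≤ jj k ∧ jj k < t)
    -- consecutive intervals are nonadjacent: j_k + 2 ≤ i_{k+1}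
    (hgap : ∀ k : Fin ρ, ∀ h : (k : ℕ) + 1 < ρ, jj k + 2 ≤ ii ⟨(k : ℕ) + 1, h⟩)
    -- 1 ∈ A: the first interval starts at 1
    (h1 : ii ⟨0, hρ⟩ = 1) :
    -- _{−A}T^{(+)} = ( Σ_{k=1}^{ρ} P(t)^{j_k+1} − Σ_{ℓ=2}^{ρ} P(t)^{i_ℓ} ) · W(R)
    (fun c : Fin t =>
        if ∃ k, ii k ≤ (c : ℕ) + 1 ∧ (c : ℕ) + 1 ≤ jj k then (-1 : ℝ) else 1) =
      Matrix.vecMul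
        (fun c =>
          (∑ k : Fin ρ, Pmat t ⟨jj k, (hb k).2.2⟩ c) -
          ∑ k : Fin ρ, (if (k : ℕ) = 0 then 0 else
            Pmat t ⟨ii k - 1, by obtain ⟨a, b, c'⟩ := hb k; omega⟩ c))
        (Wmat t) := by
  funext c
  have hc := c.isLt
  symm
  -- abbreviations
  have hA : ∀ k : Fin ρ, ∑ i : Fin t, Pmat t ⟨jj k, (hb k).2.2⟩ i * Wmat t i c
      = (if (c:ℕ) < jj k then (-1:ℝ) else 1) := by
    intro k
    have := PW t hev (jj k) (hb k).2.2 c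
    simpa [Matrix.vecMul, dotProduct] using this
  have hB : ∀ k : Fin ρ, ∑ i : Fin t,
      (if (k : ℕ) = 0 then 0 else
        Pmat t ⟨ii k - 1, by obtain ⟨a, b, c'⟩ := hb k; omega⟩ i) * Wmat t i c
      = (if (k : ℕ) = 0 then 0 else if (c:ℕ) < ii k - 1 then (-1:ℝ) else 1) := by
    intro k
    by_cases hk0 : (k : ℕ) = 0
    · simp [hk0]
    · simp only [if_neg hk0]
      have := PW t hev (ii k - 1) (by obtain ⟨a, b, c'⟩ := hb k; omega) c
      simpa [Matrix.vecMul, dotProduct] using this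
  have step1 : Matrix.vecMul
        (fun c =>
          (∑ k : Fin ρ, Pmat t ⟨jj k, (hb k).2.2⟩ c) -
          ∑ k : Fin ρ, (if (k : ℕ) = 0 then 0 else
            Pmat t ⟨ii k - 1, by obtain ⟨a, b, c'⟩ := hb k; omega⟩ c))
        (Wmat t) c
      = (∑ k : Fin ρ, (if (c:ℕ) < jj k then (-1:ℝ) else 1)) -
        ∑ k : Fin ρ, (if (k : ℕ) = 0 then 0 else if (c:ℕ) < ii k - 1 then (-1:ℝ) else 1) := by
    simp only [Matrix.vecMul, dotProduct, sub_mul, Finset.sum_mul,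
      Finset.sum_sub_distrib]
    refine congrArg₂ (· - ·) ?_ ?_
    · rw [Finset.sum_comm]
      exact Finset.sum_congr rfl fun k _ => hA k
    · rw [Finset.sum_comm]
      exact Finset.sum_congr rfl fun k _ => hB k
  rw [step1, ← Finset.sum_sub_distrib]
  have hchain := chain ii jj (fun k => (hb k).2.1) hgap
  have hterm : ∀ k : Fin ρ,
      (if (c:ℕ) < jj k then (-1:ℝ) else 1) -
        (if (k : ℕ) = 0 then 0 else if (c:ℕ) < ii k - 1 then (-1:ℝ) else 1)
      = (if (k : ℕ) = 0 then 1 else 0) +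
        (if ii k ≤ (c:ℕ) + 1 ∧ (c:ℕ) + 1 ≤ jj k then -2 else 0) := by
    intro k
    obtain ⟨hb1, hb2, hb3⟩ := hb k
    by_cases hk0 : (k : ℕ) = 0
    · have hk : k = ⟨0, hρ⟩ := Fin.ext hk0
      have hii : ii k = 1 := by rw [hk]; exact h1
      simp only [if_pos hk0]
      split_ifs <;> first | omega | norm_num
    · simp only [if_neg hk0]
      split_ifs <;> first | omega | norm_num
  rw [Finset.sum_congr rfl (fun k _ => hterm k), Finset.sum_add_distrib]
  have hS1 : ∑ k : Fin ρ, (if (k : ℕ) = 0 then (1:ℝ) else 0) = 1 := by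
    rw [Finset.sum_eq_single_of_mem ⟨0, hρ⟩ (mem_univ _)
      (fun b _ hbne => if_neg (fun h => hbne (Fin.ext h)))]
    simp
  rw [hS1]
  by_cases hex : ∃ k, ii k ≤ (c:ℕ) + 1 ∧ (c:ℕ) + 1 ≤ jj k
  · obtain ⟨m, hm⟩ := hex
    have hS2 : ∑ k : Fin ρ, (if ii k ≤ (c:ℕ) + 1 ∧ (c:ℕ) + 1 ≤ jj k then (-2:ℝ) else 0)
        = -2 := by
      rw [Finset.sum_eq_single_of_mem m (mem_univ _) (fun b _ hbne => if_neg (fun h => by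
        rcases Nat.lt_trichotomy (b : ℕ) (m : ℕ) with hlt | heq | hgt
        · have := hchain b m hlt
          omega
        · exact hbne (Fin.ext heq)
        · have := hchain m b hgt
          omega))]
      rw [if_pos hm]
    rw [hS2, if_pos ⟨m, hm⟩]
    norm_num
  · have hS2 : ∑ k : Fin ρ, (if ii k ≤ (c:ℕ) + 1 ∧ (c:ℕ) + 1 ≤ jj k then (-2:ℝ) else 0)
        = 0 := Finset.sum_eq_zero (fun b _ => if_neg (fun h => hex ⟨b, h⟩))
    rw [hS2, if_neg hex]
    norm_num
end
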